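/- For the strongly-convex variant of AdaBB, the quantities M_k and P_k satisfy: M_k ≥ 0, P_k ≥ 0 and P_k = α_k·θ_k for all k ≥ 1; and 2M_{k+1} ≤ 1 and P_{k+1} ≤ α_k + η·P_k for all k ≥ 0. -/

import Mathlib

open scoped RealInnerProductSpace
open Finset Filter

noncomputable section

/-- The strongly-convex variant of the AdaBB iteration (stepsize rule (5.2) of the paper),
with parameters `η ∈ [0,1)` and `δ ∈ (1,2)`, for a convex differentiable function
`f : ℝⁿ → ℝ` with gradient `f'` that attains its minimum. -/
structure AdaBBSC (n : ℕ) where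
  η : ℝ
  δ : ℝ
  hη0 : 0 ≤ η
  hη1 : η < 1
  hδ1 : 1 < δ
  hδ2 : δ < 2
  f : EuclideanSpace ℝ (Fin n) → ℝ
  f' : EuclideanSpace ℝ (Fin n) → EuclideanSpace ℝ (Fin n)
  x : ℕ → EuclideanSpace ℝ (Fin n)
  α : ℕ → ℝ
  θ : ℕ → ℝ
  lam : ℕ → ℝ
  hconv : ConvexOn ℝ Set.univ f
  hgrad : ∀ y, HasGradientAt f (f' y) y
  hmin : ∃ z, ∀ y, f z ≤ f y
  hα0 : 0 < α 0
  hθ0 : 0 ≤ θ 0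
  hx1 : x 1 = x 0 - α 0 • f' (x 0)
  hne : ∀ k, f' (x (k + 1)) ≠ f' (x k)
  hlam : ∀ k, lam (k + 1) =
    ⟪f' (x (k + 1)) - f' (x k), x (k + 1) - x k⟫ / ‖f' (x (k + 1)) - f' (x k)‖ ^ 2
  hlampos : ∀ k, 0 < lam (k + 1)
  hcase1 : ∀ k, α k ≤ lam (k + 1) →
    α (k + 1) = min (Real.sqrt (1 + η * θ k) * α k) (lam (k + 1)) ∧
    θ (k + 1) = α (k + 1) / α k
  hcase2 : ∀ k, δ * α k / 2 < lam (k + 1) → lam (k + 1) < α k →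
    α (k + 1) = lam (k + 1) ∧ θ (k + 1) = 2 * α (k + 1) / α k - 1
  hcase3 : ∀ k, lam (k + 1) ≤ δ * α k / 2 →
    α (k + 1) = lam (k + 1) / Real.sqrt 2 ∧ θ (k + 1) = α (k + 1) / α k
  hstep : ∀ k, x (k + 2) = x (k + 1) - α (k + 1) • f' (x (k + 1))

namespace AdaBBSC

variable {n : ℕ}

/-- `M_k` (for `k ≥ 1`), as in (5.4). -/
def M (S : AdaBBSC n) (k : ℕ) : ℝ :=
  if S.α (k - 1) ≤ S.lam k then 0
  else if S.δ * S.α (k - 1) / 2 < S.lam k then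
    S.α k / S.α (k - 1) - S.α k ^ 2 / S.α (k - 1) ^ 2
  else 1 / 2 - S.lam k / (2 * S.α (k - 1))

/-- `P_k` for `k ≥ 1`, as in (5.4). -/
def Paux (S : AdaBBSC n) (k : ℕ) : ℝ :=
  if S.α (k - 1) ≤ S.lam k then S.α k ^ 2 / S.α (k - 1)
  else if S.δ * S.α (k - 1) / 2 < S.lam k then 2 * S.α k ^ 2 / S.α (k - 1) - S.α k
  else S.α k ^ 2 / S.α (k - 1)

/-- `P_k`, with the convention `P_0 = (P_1 - α_0)/η` if `η ∈ (0,1)` and `P_0 = 0` if `η = 0`. -/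
def P (S : AdaBBSC n) (k : ℕ) : ℝ :=
  if k = 0 then (if S.η = 0 then 0 else (S.Paux 1 - S.α 0) / S.η) else S.Paux k

end AdaBBSC

end
/-- Lemma 5.1: for the strongly-convex variant of AdaBB, `M_k ≥ 0`, `P_k ≥ 0` and
`P_k = α_k·θ_k` for all `k ≥ 1`; and `2·M_{k+1} ≤ 1` and `P_{k+1} ≤ α_k + η·P_k` for all
`k ≥ 0`. -/
theorem adabbsc_MP_properties (n : ℕ) (S : AdaBBSC n) :
    (∀ k, 1 ≤ k → 0 ≤ S.M k ∧ 0 ≤ S.P k ∧ S.P k = S.α k * S.θ k) ∧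
    (∀ k, 2 * S.M (k + 1) ≤ 1 ∧ S.P (k + 1) ≤ S.α k + S.η * S.P k) := by
  have hη0 := S.hη0
  have hδ1 := S.hδ1
  have hδ2 := S.hδ2
  -- positivity of stepsizes and nonnegativity of θ
  have hpos : ∀ k, 0 < S.α k ∧ 0 ≤ S.θ k := by
    intro k
    induction k with
    | zero => exact ⟨S.hα0, S.hθ0⟩
    | succ m ih =>
      obtain ⟨hαm, hθm⟩ := ih
      have hlam := S.hlampos m
      rcases le_or_gt (S.α m) (S.lam (m + 1)) with h1 | h1
      · obtain ⟨ha, ht⟩ := S.hcase1 m h1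
        have hs : 0 < Real.sqrt (1 + S.η * S.θ m) := by
          apply Real.sqrt_pos.mpr
          nlinarith [mul_nonneg hη0 hθm]
        have hα' : 0 < S.α (m + 1) := by
          rw [ha]; exact lt_min (mul_pos hs hαm) hlam
        exact ⟨hα', by rw [ht]; positivity⟩
      · rcases lt_or_ge (S.δ * S.α m / 2) (S.lam (m + 1)) with h2 | h2
        · obtain ⟨ha, ht⟩ := S.hcase2 m h2 h1
          have hα' : 0 < S.α (m + 1) := by rw [ha]; exact hlam
          refine ⟨hα', ?_⟩
          rw [ht, sub_nonneg, le_div_iff₀ hαm]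
          have h2' : S.δ * S.α m / 2 < S.α (m + 1) := by rw [ha]; exact h2
          nlinarith
        · obtain ⟨ha, ht⟩ := S.hcase3 m h2
          have hα' : 0 < S.α (m + 1) := by
            rw [ha]
            exact div_pos hlam (by positivity)
          exact ⟨hα', by rw [ht]; positivity⟩
  -- main facts about M and Paux at index m+1
  have hpart1 : ∀ m, 0 ≤ S.M (m + 1) ∧ 0 ≤ S.Paux (m + 1) ∧
      S.Paux (m + 1) = S.α (m + 1) * S.θ (m + 1) ∧ 2 * S.M (m + 1) ≤ 1 := by
    intro m
    obtain ⟨hαm, hθm⟩ := hpos m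
    obtain ⟨hα1, hθ1⟩ := hpos (m + 1)
    have hlam := S.hlampos m
    have hαm' := hαm.ne'
    simp only [AdaBBSC.M, AdaBBSC.Paux, Nat.add_sub_cancel]
    rcases le_or_gt (S.α m) (S.lam (m + 1)) with h1 | h1
    · obtain ⟨ha, ht⟩ := S.hcase1 m h1
      rw [if_pos h1, if_pos h1]
      refine ⟨le_refl 0, by positivity, ?_, by norm_num⟩
      rw [ht]; field_simp
    · rcases lt_or_ge (S.δ * S.α m / 2) (S.lam (m + 1)) with h2 | h2
      · obtain ⟨ha, ht⟩ := S.hcase2 m h2 h1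
        rw [if_neg (not_le.mpr h1), if_pos h2, if_neg (not_le.mpr h1), if_pos h2]
        have hle : S.α (m + 1) < S.α m := by rw [ha]; exact h1
        have h2' : S.δ * S.α m / 2 < S.α (m + 1) := by rw [ha]; exact h2
        have hdiv : S.α (m + 1) / S.α m ≤ 1 := (div_le_one hαm).mpr hle.le
        have hdiv0 : 0 ≤ S.α (m + 1) / S.α m := by positivity
        have hpow : S.α (m + 1) ^ 2 / S.α m ^ 2 = (S.α (m + 1) / S.α m) ^ 2 := by
          rw [div_pow]
        refine ⟨?_, ?_, ?_, ?_⟩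
        · rw [hpow]; nlinarith
        · rw [sub_nonneg, le_div_iff₀ hαm]; nlinarith
        · rw [ht]; field_simp
        · rw [hpow]; nlinarith [sq_nonneg (2 * (S.α (m + 1) / S.α m) - 1)]
      · obtain ⟨ha, ht⟩ := S.hcase3 m h2
        rw [if_neg (not_le.mpr h1), if_neg (not_lt.mpr h2),
          if_neg (not_le.mpr h1), if_neg (not_lt.mpr h2)]
        have hd : S.lam (m + 1) / (2 * S.α m) ≤ 1 / 2 := by
          rw [div_le_iff₀ (by positivity)]
          nlinarith
        have hd0 : 0 ≤ S.lam (m + 1) / (2 * S.α m) := by positivity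
        refine ⟨by linarith, by positivity, ?_, by linarith⟩
        rw [ht]; field_simp
  -- key inequality for Paux
  have hpauxle : ∀ m, S.Paux (m + 1) ≤ S.α m + S.η * (S.α m * S.θ m) := by
    intro m
    obtain ⟨hαm, hθm⟩ := hpos m
    obtain ⟨hα1, hθ1⟩ := hpos (m + 1)
    have hlam := S.hlampos m
    have hηθ : 0 ≤ S.η * (S.α m * S.θ m) := by positivity
    simp only [AdaBBSC.Paux, Nat.add_sub_cancel]
    rcases le_or_gt (S.α m) (S.lam (m + 1)) with h1 | h1
    · obtain ⟨ha, ht⟩ := S.hcase1 m h1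
      rw [if_pos h1]
      have hs0 : (0:ℝ) ≤ 1 + S.η * S.θ m := by positivity
      have hle : S.α (m + 1) ≤ Real.sqrt (1 + S.η * S.θ m) * S.α m := by
        rw [ha]; exact min_le_left _ _
      have hsq : S.α (m + 1) ^ 2 ≤ (1 + S.η * S.θ m) * S.α m ^ 2 := by
        have h' : (Real.sqrt (1 + S.η * S.θ m) * S.α m) ^ 2
            = (1 + S.η * S.θ m) * S.α m ^ 2 := by
          rw [mul_pow, Real.sq_sqrt hs0]
        nlinarith [Real.sqrt_nonneg (1 + S.η * S.θ m)]
      rw [div_le_iff₀ hαm]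
      nlinarith
    · rcases lt_or_ge (S.δ * S.α m / 2) (S.lam (m + 1)) with h2 | h2
      · obtain ⟨ha, ht⟩ := S.hcase2 m h2 h1
        rw [if_neg (not_le.mpr h1), if_pos h2]
        have hle : S.α (m + 1) < S.α m := by rw [ha]; exact h1
        have key : 2 * S.α (m + 1) ^ 2 / S.α m - S.α (m + 1) ≤ S.α m := by
          rw [sub_le_iff_le_add, div_le_iff₀ hαm]
          nlinarith [mul_nonneg (sub_pos.mpr hle).le
            (by positivity : (0:ℝ) ≤ S.α m + 2 * S.α (m + 1))]
        linarith
      · obtain ⟨ha, ht⟩ := S.hcase3 m h2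
        rw [if_neg (not_le.mpr h1), if_neg (not_lt.mpr h2)]
        have hla : S.lam (m + 1) < S.α m := by nlinarith
        have hsq : S.α (m + 1) ^ 2 = S.lam (m + 1) ^ 2 / 2 := by
          rw [ha, div_pow, Real.sq_sqrt (by norm_num : (0:ℝ) ≤ 2)]
        have key : S.α (m + 1) ^ 2 / S.α m ≤ S.α m := by
          rw [div_le_iff₀ hαm, hsq]
          nlinarith
        linarith
  constructor
  · intro k hk
    match k, hk with
    | m + 1, _ =>
      obtain ⟨hM, hP, hPe, _⟩ := hpart1 m
      have hPeq : S.P (m + 1) = S.Paux (m + 1) := by simp [AdaBBSC.P]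
      exact ⟨hM, by rw [hPeq]; exact hP, by rw [hPeq]; exact hPe⟩
  · intro k
    refine ⟨(hpart1 k).2.2.2, ?_⟩
    match k with
    | 0 =>
      have h0 := hpauxle 0
      have hP1 : S.P 1 = S.Paux 1 := by simp [AdaBBSC.P]
      show S.P 1 ≤ S.α 0 + S.η * S.P 0
      by_cases hη : S.η = 0
      · have hP0 : S.P 0 = 0 := by simp [AdaBBSC.P, hη]
        rw [hP0, hP1, hη, mul_zero, add_zero]
        rw [hη] at h0
        simp only [zero_mul, add_zero] at h0
        exact h0
      · have hP0 : S.P 0 = (S.Paux 1 - S.α 0) / S.η := by simp [AdaBBSC.P, hη]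
        rw [hP0, hP1, mul_div_cancel₀ _ hη]
        linarith
    | m + 1 =>
      obtain ⟨_, _, hPe, _⟩ := hpart1 m
      have hPeq1 : S.P (m + 1) = S.Paux (m + 1) := by simp [AdaBBSC.P]
      have hPeq2 : S.P (m + 2) = S.Paux (m + 2) := by simp [AdaBBSC.P]
      rw [hPeq1, hPeq2, hPe]
      exact hpauxle (m + 1)
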